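/- Let F = FreeGroup α be a free group with a distinguished generator a = of(s), word metric d(x,y) = |x⁻¹y|, γ_v = {g ∈ F : for all sufficiently large k ∈ ℕ, d(v, a^k) = d(v,g) + d(g, a^k)}, and γ_v^n = {g ∈ γ_v : d(v,g) ≤ n}. If x, y ∈ F satisfy d(x,y) ≤ m, then for every n ∈ ℕ the kernel u_n(x,y) = |γ_x^n ∩ γ_y^n|/(n+1) satisfies (n − m)/(n + 1) ≤ u_n(x,y) ≤ 1. -/

import Mathlib

/-- The word metric on the free group: `d x y = |x⁻¹y|`, the length of the
reduced word of `x⁻¹y`. -/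
def wordDist {α : Type*} [DecidableEq α] (x y : FreeGroup α) : ℕ :=
  (x⁻¹ * y).toWord.length

/-- The geodesic ray issuing from `v` and merging with the ray `γ₀ = {a^k : k ≥ 0}`
where `a = FreeGroup.of s`. -/
def gammaRay {α : Type*} [DecidableEq α] (s : α) (v : FreeGroup α) : Set (FreeGroup α) :=
  {g | ∀ᶠ k : ℕ in Filter.atTop,
    wordDist v ((FreeGroup.of s) ^ k) =
      wordDist v g + wordDist g ((FreeGroup.of s) ^ k)}

/-- The initial segment `γ_v^n` of length `n` of the geodesic ray `γ_v`. -/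
def gammaSeg {α : Type*} [DecidableEq α] (s : α) (v : FreeGroup α) (n : ℕ) :
    Set (FreeGroup α) :=
  {g ∈ gammaRay s v | wordDist v g ≤ n}

namespace FGAux

open FreeGroup List

variable {α : Type*} [DecidableEq α]

/-- no-cancellation relation between adjacent letters -/
def Rel : (α × Bool) → (α × Bool) → Prop :=
  fun p q => ¬(p.1 = q.1 ∧ p.2 = !q.2)

theorem reduce_eq_self_of_chain' : ∀ {L : List (α × Bool)}, Chain' Rel L → reduce L = L := by
  intro L hL
  induction L with
  | nil => rfl
  | cons x L ih =>
    replace hL := List.isChain_cons.1 hL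
    rw [FreeGroup.reduce.cons, ih hL.2]
    cases L with
    | nil => rfl
    | cons y t =>
      have : Rel x y := hL.1 y rfl
      simp only [Rel] at this
      simp [this]

theorem chain'_reduce (L : List (α × Bool)) : Chain' Rel (reduce L) := by
  induction L with
  | nil => exact List.isChain_nil
  | cons x L ih =>
    rw [FreeGroup.reduce.cons]
    cases h : reduce L with
    | nil => exact List.isChain_singleton x
    | cons y t =>
      rw [h] at ih
      by_cases hc : x.1 = y.1 ∧ x.2 = !y.2
      · simp [hc]; exact ih.tail
      · simp [hc]; exact List.isChain_cons_cons.2 ⟨hc, ih⟩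

theorem chain'_toWord (x : FreeGroup α) : Chain' Rel x.toWord := by
  rw [← FreeGroup.reduce_toWord]; exact chain'_reduce _

theorem toWord_mk_of_chain' {L : List (α × Bool)} (h : Chain' Rel L) :
    (FreeGroup.mk L).toWord = L := by
  rw [FreeGroup.toWord_mk, reduce_eq_self_of_chain' h]

theorem toWord_mul_eq {x y : FreeGroup α}
    (h : ∀ p ∈ x.toWord.getLast?, ∀ q ∈ y.toWord.head?, Rel p q) :
    (x * y).toWord = x.toWord ++ y.toWord := by
  conv_lhs => rw [← FreeGroup.mk_toWord (x := x), ← FreeGroup.mk_toWord (x := y)]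
  rw [FreeGroup.mul_mk]
  exact toWord_mk_of_chain' ((chain'_toWord x).append (chain'_toWord y) h)

/-- no-cancellation from additivity of lengths -/
theorem toWord_mul_of_length {x y : FreeGroup α}
    (h : (x * y).toWord.length = x.toWord.length + y.toWord.length) :
    (x * y).toWord = x.toWord ++ y.toWord := by
  have hred : FreeGroup.Red (x.toWord ++ y.toWord) ((x * y).toWord) := by
    have : x * y = FreeGroup.mk (x.toWord ++ y.toWord) := by
      rw [← FreeGroup.mul_mk, FreeGroup.mk_toWord, FreeGroup.mk_toWord]
    rw [this, FreeGroup.toWord_mk]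
    exact FreeGroup.reduce.red
  have hsub := hred.sublist
  exact hsub.eq_of_length (by simp [h])


theorem of_pow_mk (s : α) (j : ℕ) :
    (FreeGroup.of s) ^ j = FreeGroup.mk (List.replicate j (s, true)) := by
  rw [← FreeGroup.toWord_of_pow, FreeGroup.mk_toWord]

theorem of_inv_mk (s : α) : (FreeGroup.of s)⁻¹ = FreeGroup.mk [(s, false)] := by
  have : FreeGroup.of s = FreeGroup.mk [(s, true)] := by
    rw [← FreeGroup.toWord_of, FreeGroup.mk_toWord]
  rw [this, FreeGroup.inv_mk]
  simp [FreeGroup.invRev]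

def Rel' : (α × Bool) → (α × Bool) → Prop :=
  fun p q => ¬(p.1 = q.1 ∧ p.2 = !q.2)

theorem append_pow {s : α} {w : FreeGroup α}
    (hw : w.toWord.getLast? ≠ some (s, false)) (j : ℕ) :
    (w * (FreeGroup.of s) ^ j).toWord = w.toWord ++ List.replicate j (s, true) := by
  induction j with
  | zero => simp
  | succ j ih =>
    have : w * (FreeGroup.of s) ^ (j + 1) = (w * (FreeGroup.of s) ^ j) * FreeGroup.of s := by
      rw [pow_succ, mul_assoc]
    rw [this, toWord_mul_eq ?junction, ih, FreeGroup.toWord_of,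
      List.append_assoc, ← List.replicate_succ' (n := j)]
    case junction =>
      intro p hp q hq
      rw [FreeGroup.toWord_of] at hq
      simp only [List.head?_cons, Option.mem_def, Option.some.injEq] at hq
      subst hq
      rw [ih] at hp
      cases j with
      | zero =>
        simp only [List.replicate_zero, List.append_nil] at hp
        intro ⟨h1, h2⟩
        exact hw (by rwa [show p = (s, false) from Prod.ext h1 (by simpa using h2)] at hp)
      | succ j =>
        rw [List.replicate_succ' (n := j), ← List.append_assoc, List.getLast?_concat] at hp
        simp only [Option.mem_def, Option.some.injEq] at hp
        subst hp
        simp [Rel]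

theorem exists_tail_aux (s : α) :
    ∀ N (w : FreeGroup α), w.toWord.length ≤ N →
    ∃ t u, w = u * ((FreeGroup.of s)⁻¹) ^ t ∧
      ∀ j : ℕ, (u * (FreeGroup.of s) ^ j).toWord
        = u.toWord ++ List.replicate j (s, true) := by
  intro N
  induction N with
  | zero =>
    intro w hw
    refine ⟨0, w, by simp, fun j => ?_⟩
    exact append_pow (by simp [List.getLast?_eq_none_iff.2 (List.eq_nil_of_length_eq_zero (Nat.le_zero.1 hw))]) j
  | succ N ih =>
    intro w hw
    by_cases hlast : w.toWord.getLast? = some (s, false)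
    · have hne : w.toWord ≠ [] := by
        intro h; rw [h] at hlast; simp at hlast
      set L := w.toWord with hL
      have hdrop : (FreeGroup.mk L.dropLast).toWord = L.dropLast :=
        toWord_mk_of_chain' ((chain'_toWord w).prefix (List.dropLast_prefix L))
      have hlen : (FreeGroup.mk L.dropLast).toWord.length ≤ N := by
        rw [hdrop, List.length_dropLast]
        have := List.length_pos_iff.2 hne
        omega
      obtain ⟨t, u, h1, h2⟩ := ih (FreeGroup.mk L.dropLast) hlen
      refine ⟨t + 1, u, ?_, h2⟩
      have hw' : w = FreeGroup.mk L.dropLast * (FreeGroup.of s)⁻¹ := by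
        rw [of_inv_mk, FreeGroup.mul_mk]
        have hgl : L.getLast hne = (s, false) := by
          rw [List.getLast?_eq_getLast hne] at hlast
          exact Option.some.inj hlast
        rw [← hgl, List.dropLast_append_getLast hne]; exact FreeGroup.mk_toWord.symm
      rw [hw', h1, pow_succ, mul_assoc]
    · exact ⟨0, w, by simp, append_pow hlast⟩

theorem exists_tail (s : α) (w : FreeGroup α) :
    ∃ t u, w = u * ((FreeGroup.of s)⁻¹) ^ t ∧
      ∀ j : ℕ, (u * (FreeGroup.of s) ^ j).toWord
        = u.toWord ++ List.replicate j (s, true) :=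
  exists_tail_aux s w.toWord.length w le_rfl

theorem drop_getLast?_ne {A : List (α × Bool)} {s : α}
    (hA : A.getLast? = some (s, true)) (j : ℕ) :
    (A.drop j).getLast? ≠ some (s, false) := by
  by_cases h : A.drop j = []
  · simp [h]
  · have h2 : A = A.take j ++ A.drop j := (List.take_append_drop j A).symm
    rw [h2, List.getLast?_append] at hA
    intro hcon
    rw [hcon] at hA
    simp at hA

theorem ray_point (s : α) (v : FreeGroup α) (K : ℕ)
    (hA : (v⁻¹ * FreeGroup.of s ^ K).toWord.getLast? = some (s, true)) (j : ℕ)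
    (hj : j ≤ (v⁻¹ * FreeGroup.of s ^ K).toWord.length) :
    (FreeGroup.of s ^ K * (FreeGroup.mk ((v⁻¹ * FreeGroup.of s ^ K).toWord.drop j))⁻¹)
      ∈ gammaRay s v ∧
    wordDist v (FreeGroup.of s ^ K *
      (FreeGroup.mk ((v⁻¹ * FreeGroup.of s ^ K).toWord.drop j))⁻¹) = j := by
  set A := (v⁻¹ * FreeGroup.of s ^ K).toWord with hAdef
  set g := FreeGroup.of s ^ K * (FreeGroup.mk (A.drop j))⁻¹ with hgdef
  have hchain : List.Chain' Rel A := chain'_toWord _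
  have hmkA : FreeGroup.mk A = v⁻¹ * FreeGroup.of s ^ K := FreeGroup.mk_toWord
  have hvg : v⁻¹ * g = FreeGroup.mk (A.take j) := by
    calc v⁻¹ * g = (v⁻¹ * FreeGroup.of s ^ K) * (FreeGroup.mk (A.drop j))⁻¹ := by
          rw [hgdef, mul_assoc]
      _ = (FreeGroup.mk (A.take j) * FreeGroup.mk (A.drop j)) *
            (FreeGroup.mk (A.drop j))⁻¹ := by
          rw [← hmkA, FreeGroup.mul_mk, List.take_append_drop]
      _ = FreeGroup.mk (A.take j) := by group
  have hvgdist : wordDist v g = j := by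
    rw [wordDist, hvg, toWord_mk_of_chain' (hchain.take j), List.length_take]
    omega
  have key : ∀ i e : ℕ, (FreeGroup.mk (A.drop i) * FreeGroup.of s ^ e).toWord
      = A.drop i ++ List.replicate e (s, true) := by
    intro i e
    have h1 : (FreeGroup.mk (A.drop i)).toWord = A.drop i :=
      toWord_mk_of_chain' (hchain.drop i)
    rw [append_pow (by rw [h1]; exact drop_getLast?_ne hA i) e, h1]
  have hpow : ∀ k, K ≤ k →
      FreeGroup.of s ^ k = FreeGroup.of s ^ K * FreeGroup.of s ^ (k - K) := by
    intro k hk; rw [← pow_add]; congr 1; omega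
  have hdist : ∀ i, ∀ k, K ≤ k →
      wordDist (FreeGroup.of s ^ K * (FreeGroup.mk (A.drop i))⁻¹) (FreeGroup.of s ^ k)
        = (A.length - i) + (k - K) := by
    intro i k hk
    have hg : (FreeGroup.of s ^ K * (FreeGroup.mk (A.drop i))⁻¹)⁻¹ * FreeGroup.of s ^ k
        = FreeGroup.mk (A.drop i) * FreeGroup.of s ^ (k - K) := by
      rw [mul_inv_rev, inv_inv, mul_assoc, hpow k hk, inv_mul_cancel_left]
    rw [wordDist, hg, key, List.length_append, List.length_drop, List.length_replicate]
  have hvdist : ∀ k, K ≤ k →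
      wordDist v (FreeGroup.of s ^ k) = A.length + (k - K) := by
    intro k hk
    have hg : v⁻¹ * FreeGroup.of s ^ k
        = FreeGroup.mk (A.drop 0) * FreeGroup.of s ^ (k - K) := by
      rw [List.drop_zero, hmkA, hpow k hk, mul_assoc]
    rw [wordDist, hg, key, List.length_append, List.length_drop, List.length_replicate]
    omega
  refine ⟨?_, hvgdist⟩
  rw [gammaRay, Set.mem_setOf_eq, Filter.eventually_atTop]
  refine ⟨K, fun k hk => ?_⟩
  rw [hvdist k hk, hvgdist, hgdef, hdist j k hk]
  omega

theorem injOn_wordDist (s : α) (v : FreeGroup α) :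
    Set.InjOn (wordDist v) (gammaRay s v) := by
  intro g hg h hh hgh
  obtain ⟨k, hk1, hk2⟩ := (hg.and hh).exists
  have step : ∀ w : FreeGroup α,
      wordDist v (FreeGroup.of s ^ k) = wordDist v w + wordDist w (FreeGroup.of s ^ k) →
      (v⁻¹ * w).toWord = ((v⁻¹ * FreeGroup.of s ^ k).toWord).take (wordDist v w) := by
    intro w hw
    have hx : (v⁻¹ * w) * (w⁻¹ * FreeGroup.of s ^ k) = v⁻¹ * FreeGroup.of s ^ k := by
      group
    have e1 := toWord_mul_of_length (x := v⁻¹ * w) (y := w⁻¹ * FreeGroup.of s ^ k)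
      (by rw [hx]; exact hw)
    rw [hx] at e1
    rw [e1]
    exact (List.take_left' rfl).symm
  have e1 := step g hk1
  have e2 := step h hk2
  rw [hgh] at e1
  rw [← e2] at e1
  exact mul_left_cancel (FreeGroup.toWord_injective e1)

theorem seg_subset_image (s : α) (v : FreeGroup α) (n : ℕ) :
    wordDist v '' (gammaSeg s v n) ⊆ Set.Iic n := by
  rintro - ⟨g, hg, rfl⟩; exact hg.2

theorem seg_finite (s : α) (v : FreeGroup α) (n : ℕ) : (gammaSeg s v n).Finite := by
  exact Set.Finite.of_finite_image ((Set.finite_Iic n).subset (seg_subset_image s v n))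
    ((injOn_wordDist s v).mono (fun g (hg : g ∈ gammaSeg s v n) => hg.1))

theorem ncard_seg_le (s : α) (v : FreeGroup α) (n : ℕ) :
    (gammaSeg s v n).ncard ≤ n + 1 := by
  have h := Set.ncard_le_ncard_of_injOn (wordDist v)
    (fun g (hg : g ∈ gammaSeg s v n) => hg.2)
    ((injOn_wordDist s v).mono (fun g (hg : g ∈ gammaSeg s v n) => hg.1)) (Set.finite_Iic n)
  rwa [← Finset.coe_Iic, Set.ncard_coe_finset, Nat.card_Iic] at h

theorem inter_card_ge (s : α) (m : ℕ) (x y : FreeGroup α)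
    (hxy : wordDist x y ≤ m) (n : ℕ) (hmn : m ≤ n) :
    n + 1 - m ≤ (gammaSeg s x n ∩ gammaSeg s y n).ncard := by
  classical
  obtain ⟨tx, ux, hx1, hx2⟩ := exists_tail s x⁻¹
  obtain ⟨ty, uy, hy1, hy2⟩ := exists_tail s y⁻¹
  set K := n + tx + ty + 1 with hK
  set A := (x⁻¹ * FreeGroup.of s ^ K).toWord with hAdef
  set B := (y⁻¹ * FreeGroup.of s ^ K).toWord with hBdef
  have hchA : List.Chain' Rel A := chain'_toWord _
  have hchB : List.Chain' Rel B := chain'_toWord _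
  have hpowsplit : ∀ t : ℕ, t ≤ K → ((FreeGroup.of s)⁻¹) ^ t * FreeGroup.of s ^ K
      = FreeGroup.of s ^ (K - t) := by
    intro t ht
    rw [inv_pow, show FreeGroup.of s ^ K = FreeGroup.of s ^ t * FreeGroup.of s ^ (K - t) by
      rw [← pow_add]; congr 1; omega, inv_mul_cancel_left]
  have hAeq : A = ux.toWord ++ List.replicate (K - tx) (s, true) := by
    rw [hAdef, hx1, mul_assoc, hpowsplit tx (by omega), hx2]
  have hBeq : B = uy.toWord ++ List.replicate (K - ty) (s, true) := by
    rw [hBdef, hy1, mul_assoc, hpowsplit ty (by omega), hy2]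
  have hAlast : A.getLast? = some (s, true) := by
    rw [hAeq, List.getLast?_append, List.getLast?_replicate]
    have : K - tx ≠ 0 := by omega
    simp [this]
  have hBlast : B.getLast? = some (s, true) := by
    rw [hBeq, List.getLast?_append, List.getLast?_replicate]
    have : K - ty ≠ 0 := by omega
    simp [this]
  have hAlen : n + 1 ≤ A.length := by
    rw [hAeq, List.length_append, List.length_replicate]; omega
  have hBlen : n + 1 ≤ B.length := by
    rw [hBeq, List.length_append, List.length_replicate]; omega
  -- longest common suffix
  set P : ℕ → Prop := fun q => A.drop (A.length - q) = B.drop (B.length - q) with hPdef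
  set c := Nat.findGreatest P (min A.length B.length) with hcdef
  have hc : P c := Nat.findGreatest_spec (Nat.zero_le _) (by simp [hPdef, List.drop_length])
  have hcle : c ≤ min A.length B.length := Nat.findGreatest_le _
  have hmono : ∀ q ≤ c, A.drop (A.length - q) = B.drop (B.length - q) := by
    intro q hq
    have h1 : A.drop (A.length - q) = (A.drop (A.length - c)).drop (c - q) := by
      rw [List.drop_drop]; congr 1; omega
    have h2 : B.drop (B.length - q) = (B.drop (B.length - c)).drop (c - q) := by
      rw [List.drop_drop]; congr 1; omega
    rw [h1, h2, hc]
  -- the distance formula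
  have hfact : x⁻¹ * y = FreeGroup.mk (A.take (A.length - c)
      ++ FreeGroup.invRev (B.take (B.length - c))) := by
    have e1 : x⁻¹ * y = (x⁻¹ * FreeGroup.of s ^ K) * (y⁻¹ * FreeGroup.of s ^ K)⁻¹ := by
      group
    rw [e1, ← FreeGroup.mk_toWord (x := x⁻¹ * FreeGroup.of s ^ K),
      ← FreeGroup.mk_toWord (x := y⁻¹ * FreeGroup.of s ^ K), ← hAdef, ← hBdef]
    calc FreeGroup.mk A * (FreeGroup.mk B)⁻¹
        = FreeGroup.mk (A.take (A.length - c)) *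
            (FreeGroup.mk (A.drop (A.length - c)) * (FreeGroup.mk (B.drop (B.length - c)))⁻¹) *
            (FreeGroup.mk (B.take (B.length - c)))⁻¹ := by
          conv_lhs => rw [← List.take_append_drop (A.length - c) A,
            ← List.take_append_drop (B.length - c) B]
          rw [← FreeGroup.mul_mk, ← FreeGroup.mul_mk, mul_inv_rev]
          group
      _ = FreeGroup.mk (A.take (A.length - c)) * (FreeGroup.mk (B.take (B.length - c)))⁻¹ := by
          rw [hc]; group
      _ = FreeGroup.mk (A.take (A.length - c)
            ++ FreeGroup.invRev (B.take (B.length - c))) := by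
          rw [FreeGroup.inv_mk, FreeGroup.mul_mk]
  have hchainBI : List.Chain' Rel (FreeGroup.invRev (B.take (B.length - c))) := by
    have hred : reduce (FreeGroup.invRev (B.take (B.length - c)))
        = FreeGroup.invRev (B.take (B.length - c)) := by
      rw [FreeGroup.reduce_invRev, reduce_eq_self_of_chain' (hchB.take _)]
    rw [← hred]; exact chain'_reduce _
  have hjunction : ∀ p ∈ (A.take (A.length - c)).getLast?,
      ∀ q ∈ (FreeGroup.invRev (B.take (B.length - c))).head?, Rel p q := by
    intro p hp q hq
    by_contra hcon
    rw [Rel, not_not] at hcon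
    -- identify q with the last letter of B.take (B.length - c)
    rw [FreeGroup.invRev, List.head?_reverse, List.getLast?_map] at hq
    obtain ⟨pb, hpb, hqpb⟩ := Option.map_eq_some_iff.1 hq
    have hppb : p = pb := by
      obtain ⟨h1, h2⟩ := hcon
      rw [← hqpb] at h1 h2
      exact Prod.ext h1 (by simpa using h2)
    -- lengths
    have hAne : A.take (A.length - c) ≠ [] := by
      intro hnil; rw [hnil] at hp; simp at hp
    have hBne : B.take (B.length - c) ≠ [] := by
      intro hnil; rw [hnil] at hpb; simp at hpb
    have hAc : c + 1 ≤ A.length := by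
      have := List.length_pos_iff.2 hAne
      rw [List.length_take] at this
      omega
    have hBc : c + 1 ≤ B.length := by
      have := List.length_pos_iff.2 hBne
      rw [List.length_take] at this
      omega
    -- common suffix of length c + 1
    have hgetA : A[A.length - c - 1]? = some p := by
      rw [List.getLast?_eq_getElem?] at hp
      rwa [List.getElem?_take_of_lt (by rw [List.length_take]; omega),
        List.length_take, min_eq_left (by omega)] at hp
    have hgetB : B[B.length - c - 1]? = some p := by
      rw [List.getLast?_eq_getElem?] at hpb
      rw [List.getElem?_take_of_lt (by rw [List.length_take]; omega),
        List.length_take, min_eq_left (by omega)] at hpb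
      rwa [hppb]
    have hPc1 : P (c + 1) := by
      rw [hPdef]
      obtain ⟨hA1, hA2⟩ := List.getElem?_eq_some_iff.1 hgetA
      obtain ⟨hB1, hB2⟩ := List.getElem?_eq_some_iff.1 hgetB
      rw [show A.length - (c + 1) = A.length - c - 1 by omega,
        show B.length - (c + 1) = B.length - c - 1 by omega,
        List.drop_eq_getElem_cons hA1, List.drop_eq_getElem_cons hB1, hA2, hB2,
        show A.length - c - 1 + 1 = A.length - c by omega,
        show B.length - c - 1 + 1 = B.length - c by omega, hc]
    have hng : ¬ P (c + 1) := Nat.findGreatest_is_greatest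
      (by rw [← hcdef]; omega) (le_min (by omega) (by omega))
    exact hng hPc1
  have hdxy : wordDist x y = (A.length - c) + (B.length - c) := by
    rw [wordDist, hfact, toWord_mk_of_chain' (((hchA.take _).append hchainBI) hjunction),
      List.length_append, FreeGroup.invRev_length, List.length_take, List.length_take]
    omega
  have hm1 : A.length - c ≤ m := by omega
  have hm2 : B.length - c ≤ m := by omega
  -- the common points
  set q0 := max (A.length - n) (B.length - n) with hq0def
  have hq0c : q0 ≤ c := max_le (by omega) (by omega)
  set T := (fun q => FreeGroup.of s ^ K * (FreeGroup.mk (A.drop (A.length - q)))⁻¹) ''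
    (Set.Icc q0 c) with hTdef
  have hTsub : T ⊆ gammaSeg s x n ∩ gammaSeg s y n := by
    rintro - ⟨q, hq, rfl⟩
    rw [Set.mem_Icc] at hq
    show FreeGroup.of s ^ K * (FreeGroup.mk (A.drop (A.length - q)))⁻¹ ∈ _
    have hxmem := ray_point s x K hAlast (A.length - q) (by rw [← hAdef]; omega)
    have hymem := ray_point s y K hBlast (B.length - q) (by rw [← hBdef]; omega)
    rw [← hAdef] at hxmem
    rw [← hBdef] at hymem
    constructor
    · exact ⟨hxmem.1, by rw [hxmem.2]; omega⟩
    · rw [hmono q hq.2]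
      exact ⟨hymem.1, by rw [hymem.2]; omega⟩
  have hTinj : Set.InjOn (fun q => FreeGroup.of s ^ K *
      (FreeGroup.mk (A.drop (A.length - q)))⁻¹) (Set.Icc q0 c) := by
    intro q1 hq1 q2 hq2 heq
    simp only at heq
    have := inv_injective (mul_left_cancel heq)
    have hW := congrArg FreeGroup.toWord this
    rw [toWord_mk_of_chain' (hchA.drop _), toWord_mk_of_chain' (hchA.drop _)] at hW
    have := congrArg List.length hW
    rw [List.length_drop, List.length_drop] at this
    rw [Set.mem_Icc] at hq1 hq2
    omega
  have hTcard : T.ncard = c + 1 - q0 := by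
    rw [hTdef, Set.ncard_image_of_injOn hTinj, ← Finset.coe_Icc, Set.ncard_coe_finset,
      Nat.card_Icc]
  have hfin : (gammaSeg s x n ∩ gammaSeg s y n).Finite :=
    (seg_finite s x n).inter_of_left _
  have hle := Set.ncard_le_ncard hTsub hfin
  rw [hTcard] at hle
  omega

end FGAux

/-- If `d(x,y) ≤ m`, then for every `n` the kernel
`u_n(x,y) = |γ_x^n ∩ γ_y^n|/(n+1)` satisfies `(n−m)/(n+1) ≤ u_n(x,y) ≤ 1`. -/
theorem freeGroup_overlap_kernel_bounds {α : Type*} [DecidableEq α]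
    (s : α) (m : ℕ) (x y : FreeGroup α) (hxy : wordDist x y ≤ m) (n : ℕ) :
    ((n : ℝ) - m) / (n + 1) ≤
      ((gammaSeg s x n ∩ gammaSeg s y n).ncard : ℝ) / (n + 1) ∧
    ((gammaSeg s x n ∩ gammaSeg s y n).ncard : ℝ) / (n + 1) ≤ 1 := by
  have hpos : (0 : ℝ) < (n : ℝ) + 1 := by positivity
  constructor
  · rcases le_or_gt m n with hmn | hmn
    · have hN := FGAux.inter_card_ge s m x y hxy n hmn
      have hcast : ((n : ℝ) - m) ≤ ((gammaSeg s x n ∩ gammaSeg s y n).ncard : ℝ) := by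
        have h1 : ((n + 1 - m : ℕ) : ℝ) ≤ ((gammaSeg s x n ∩ gammaSeg s y n).ncard : ℝ) := by
          exact_mod_cast hN
        rw [Nat.cast_sub (by omega)] at h1
        push_cast at h1
        linarith
      exact div_le_div_of_nonneg_right hcast hpos.le
    · have h1 : ((n : ℝ) - m) / (n + 1) ≤ 0 := by
        apply div_nonpos_of_nonpos_of_nonneg
        · have : (n : ℝ) < m := by exact_mod_cast hmn
          linarith
        · positivity
      have h2 : (0 : ℝ) ≤ ((gammaSeg s x n ∩ gammaSeg s y n).ncard : ℝ) / (n + 1) := by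
        positivity
      linarith
  · apply div_le_one_of_le₀
    · have hcard : (gammaSeg s x n ∩ gammaSeg s y n).ncard ≤ n + 1 :=
        le_trans (Set.ncard_le_ncard Set.inter_subset_left (FGAux.seg_finite s x n))
          (FGAux.ncard_seg_le s x n)
      exact_mod_cast hcard
    · positivity
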